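/- arXiv:1305.0412 — 2 statements merged into one kernel-verified Lean document; each statement's English description precedes it below -/
import Mathlib

section
/- Minimum of tr(A⁻¹ Z) under power constraint only: for A ≻ 0, the minimizer of tr(A⁻¹ Z) over Hermitian Z ≻ 0 subject to tr(Z⁻¹) ≤ P is Z* = (tr(A^{-1/2})/P) · A^{1/2}, and the optimal value is tr(A^{-1/2})²/P. -/
open Matrix
open scoped ComplexOrder

/-- The square root of a positive semi-definite matrix, as `Matrix.PosSemidef.sqrt` was defined
in Mathlib of December 2024 (since removed in favour of `CFC.sqrt`). -/
noncomputable def Matrix.PosSemidef.sqrt {n : Type*} {𝕜 : Type*} [Fintype n] [RCLike 𝕜]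
    [DecidableEq n] {A : Matrix n n 𝕜} (hA : A.PosSemidef) : Matrix n n 𝕜 :=
  (hA.1.eigenvectorUnitary : Matrix n n 𝕜) *
    diagonal (fun i => ((√(hA.1.eigenvalues i) : ℝ) : 𝕜)) *
    (star hA.1.eigenvectorUnitary : Matrix n n 𝕜)

lemma my_posSemidef_sqrt {m : ℕ} {A : Matrix (Fin m) (Fin m) ℂ} (hA : A.PosSemidef) :
    hA.sqrt.PosSemidef := by
  unfold Matrix.PosSemidef.sqrt
  have hd : (diagonal (fun i => ((√(hA.1.eigenvalues i) : ℝ) : ℂ))).PosSemidef :=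
    PosSemidef.diagonal (fun i => by simp [Complex.zero_le_real, Real.sqrt_nonneg])
  exact hd.mul_mul_conjTranspose_same (hA.1.eigenvectorUnitary : Matrix (Fin m) (Fin m) ℂ)

lemma my_sqrt_mul_self {m : ℕ} {A : Matrix (Fin m) (Fin m) ℂ} (hA : A.PosSemidef) :
    hA.sqrt * hA.sqrt = A := by
  unfold Matrix.PosSemidef.sqrt
  have h := hA.1.spectral_theorem
  simp only [Unitary.conjStarAlgAut_apply] at h
  refine Eq.trans ?_ h.symm
  have hU : (star (hA.1.eigenvectorUnitary : Matrix (Fin m) (Fin m) ℂ)) *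
      (hA.1.eigenvectorUnitary : Matrix (Fin m) (Fin m) ℂ) = 1 := by
    simp
  have hd : (diagonal (fun i => ((√(hA.1.eigenvalues i) : ℝ) : ℂ))) *
      (diagonal (fun i => ((√(hA.1.eigenvalues i) : ℝ) : ℂ))) =
      diagonal (RCLike.ofReal ∘ hA.1.eigenvalues) := by
    rw [diagonal_mul_diagonal]
    congr 1
    funext i
    simp only [Function.comp_apply]
    rw [← Complex.ofReal_mul, Real.mul_self_sqrt (hA.eigenvalues_nonneg i)]
    rfl
  simp only [Matrix.mul_assoc] at hU ⊢
  rw [← Matrix.mul_assoc (star _) _ (_ * _), hU, Matrix.one_mul, ← Matrix.mul_assoc _ _ (star _)]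
  exact congrArg (_ * ·) (congrArg (· * _) hd)

lemma my_sqrt_posDef {m : ℕ} {A : Matrix (Fin m) (Fin m) ℂ} (hA : A.PosDef) :
    hA.posSemidef.sqrt.PosDef := by
  have hsd := my_posSemidef_sqrt hA.posSemidef
  refine posDef_iff_dotProduct_mulVec.mpr ⟨hsd.1, fun x hx => lt_of_le_of_ne (hsd.dotProduct_mulVec_nonneg x) fun h => ?_⟩
  have hz : hA.posSemidef.sqrt *ᵥ x = 0 := (hsd.dotProduct_mulVec_zero_iff x).mp h.symm
  have hAx : A *ᵥ x = 0 := by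
    rw [← my_sqrt_mul_self hA.posSemidef, ← mulVec_mulVec, hz, mulVec_zero]
  simpa [hAx] using hA.dotProduct_mulVec_pos hx

lemma my_smul_posDef {m : ℕ} {M : Matrix (Fin m) (Fin m) ℂ} (hM : M.PosDef) {r : ℝ} (hr : 0 < r) :
    ((r : ℂ) • M).PosDef := by
  refine posDef_iff_dotProduct_mulVec.mpr ⟨?_, fun x hx => ?_⟩
  · have := hM.1
    unfold Matrix.IsHermitian at this ⊢
    rw [conjTranspose_smul, this]
    simp [Complex.conj_ofReal]
  · rw [smul_mulVec, dotProduct_smul, smul_eq_mul]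
    exact mul_pos (Complex.zero_lt_real.mpr hr) (hM.dotProduct_mulVec_pos hx)

lemma my_trace_pos {m : ℕ} [Nonempty (Fin m)] {M : Matrix (Fin m) (Fin m) ℂ} (hM : M.PosDef) :
    0 < M.trace := by
  have hdiag : ∀ i, 0 < M i i := by
    intro i
    have := hM.dotProduct_mulVec_pos (x := Pi.single i 1) (by simp [Function.ne_iff])
    simpa [dotProduct, mulVec, Pi.single_apply, Finset.mul_sum] using this
  exact Finset.sum_pos (fun i _ => hdiag i) Finset.univ_nonempty

lemma my_trace_conjTranspose_mul_self {m : ℕ} (M : Matrix (Fin m) (Fin m) ℂ) :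
    (Mᴴ * M).trace = ((∑ i, ∑ j, ‖M j i‖ ^ 2 : ℝ) : ℂ) := by
  simp only [Matrix.trace, Matrix.diag, Matrix.mul_apply, Matrix.conjTranspose_apply]
  push_cast
  congr 1
  ext i
  congr 1
  ext j
  simp only [RCLike.star_def]
  rw [← Complex.normSq_eq_conj_mul_self]
  rw [← Complex.sq_norm]
  norm_cast

/-- Minimum of `tr(A⁻¹ Z)` under the power constraint only: the minimizer of `tr(A⁻¹ Z)` over
positive definite Hermitian `Z` with `tr(Z⁻¹) ≤ P` is `Z* = (tr(A^{-1/2})/P) A^{1/2}`, and the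
optimal value is `tr(A^{-1/2})²/P`. -/
theorem power_only_minimizer {m : ℕ} (A : Matrix (Fin m) (Fin m) ℂ) (hA : A.PosDef)
    (P : ℝ) (hP : 0 < P) :
    (((hA.posSemidef.sqrt⁻¹.trace / (P : ℂ)) • hA.posSemidef.sqrt).PosDef) ∧
    ((((hA.posSemidef.sqrt⁻¹.trace / (P : ℂ)) • hA.posSemidef.sqrt)⁻¹.trace).re ≤ P ∧
    (∀ Z : Matrix (Fin m) (Fin m) ℂ, Z.PosDef → ((Z⁻¹.trace).re ≤ P) →
      ((A⁻¹ * ((hA.posSemidef.sqrt⁻¹.trace / (P : ℂ)) • hA.posSemidef.sqrt)).trace).re ≤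
        ((A⁻¹ * Z).trace).re) ∧
    (A⁻¹ * ((hA.posSemidef.sqrt⁻¹.trace / (P : ℂ)) • hA.posSemidef.sqrt)).trace =
      hA.posSemidef.sqrt⁻¹.trace ^ 2 / (P : ℂ)) := by
  classical
  set S := hA.posSemidef.sqrt with hSdef
  have hS : S.PosDef := my_sqrt_posDef hA
  have hSS : S * S = A := my_sqrt_mul_self hA.posSemidef
  have hSinv : S⁻¹.PosDef := hS.inv
  set t := S⁻¹.trace with htdef
  have hPne : ((P : ℂ)) ≠ 0 := Complex.ofReal_ne_zero.mpr hP.ne'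
  have hAinv : A⁻¹ = S⁻¹ * S⁻¹ := by rw [← hSS, Matrix.mul_inv_rev]
  have hAS : A⁻¹ * S = S⁻¹ := by
    rw [hAinv, Matrix.mul_assoc, Matrix.nonsing_inv_mul S hS.det_pos.ne'.isUnit, Matrix.mul_one]
  have hval : (A⁻¹ * ((t / (P : ℂ)) • S)).trace = t ^ 2 / (P : ℂ) := by
    rw [Matrix.mul_smul, trace_smul, hAS, smul_eq_mul]
    ring
  rcases Nat.eq_zero_or_pos m with hm | hm
  · subst hm
    have htr0 : ∀ M : Matrix (Fin 0) (Fin 0) ℂ, M.trace = 0 := by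
      intro M; simp [Matrix.trace]
    refine ⟨⟨?_, fun x hx => absurd (Finsupp.ext fun i => i.elim0) hx⟩, ?_, ?_, ?_⟩
    · unfold Matrix.IsHermitian
      ext i j; exact i.elim0
    · rw [htr0]; simpa using hP.le
    · intro Z hZ hZP
      rw [htr0, htr0]
    · have ht0 : t = 0 := htr0 _
      rw [htr0 _, ht0]
      simp
  · have : Nonempty (Fin m) := ⟨⟨0, hm⟩⟩
    have ht_pos : 0 < t := my_trace_pos hSinv
    have htre : 0 < t.re := by
      have := Complex.lt_def.mp ht_pos
      simpa using this.1
    have htim : t.im = 0 := by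
      have := Complex.lt_def.mp ht_pos
      simpa using this.2.symm
    have htr : t = ((t.re : ℝ) : ℂ) := by
      apply Complex.ext <;> simp [htim]
    have hc : t / (P : ℂ) = ((t.re / P : ℝ) : ℂ) := by
      rw [Complex.ofReal_div, ← htr]
    have htne : t ≠ 0 := ht_pos.ne'
    refine ⟨?_, ?_, ?_, hval⟩
    · rw [hc]
      exact my_smul_posDef hS (div_pos htre hP)
    · have hcne : t / (P : ℂ) ≠ 0 := div_ne_zero htne hPne
      letI := invertibleOfNonzero hcne
      rw [Matrix.inv_smul (A := S) (t / (P : ℂ)) hS.det_pos.ne'.isUnit, trace_smul,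
        invOf_eq_inv _, ← htdef, smul_eq_mul]
      have : (t / (P : ℂ))⁻¹ * t = (P : ℂ) := by
        field_simp
      rw [this]
      simp
    · intro Z hZ hZP
      rw [hval]
      set W := hZ.posSemidef.sqrt with hWdef
      have hW : W.PosDef := my_sqrt_posDef hZ
      have hWW : W * W = Z := my_sqrt_mul_self hZ.posSemidef
      set X := W⁻¹ with hXdef
      set Y := W * S⁻¹ with hYdef
      have hXh : Xᴴ = X := hW.inv.1
      have hZinv : Z⁻¹ = Xᴴ * X := by rw [hXh, ← hWW, Matrix.mul_inv_rev]
      have hYh : Yᴴ = S⁻¹ * W := by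
        rw [hYdef, conjTranspose_mul, hSinv.1, hW.1]
      have htrY : (Yᴴ * Y).trace = (A⁻¹ * Z).trace := by
        rw [hYh, hYdef, hAinv, ← hWW]
        rw [show S⁻¹ * W * (W * S⁻¹) = S⁻¹ * (W * W * S⁻¹) by noncomm_ring]
        rw [trace_mul_comm, show W * W * S⁻¹ * S⁻¹ = W * W * (S⁻¹ * S⁻¹) by noncomm_ring,
          trace_mul_comm]
      have hXY : X * Y = S⁻¹ := by
        rw [hXdef, hYdef, ← Matrix.mul_assoc,
          Matrix.nonsing_inv_mul W hW.det_pos.ne'.isUnit, Matrix.one_mul]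
      have htsum : t = ∑ i, ∑ j, X i j * Y j i := by
        rw [htdef, ← hXY]
        simp [Matrix.trace, Matrix.diag, Matrix.mul_apply]
      set q : ℝ := ∑ i, ∑ j, ‖X j i‖ ^ 2 with hqdef
      set r : ℝ := ∑ i, ∑ j, ‖Y j i‖ ^ 2 with hrdef
      have hq : (Z⁻¹.trace).re = q := by
        rw [hZinv, my_trace_conjTranspose_mul_self, Complex.ofReal_re]
      have hr : ((A⁻¹ * Z).trace).re = r := by
        rw [← htrY, my_trace_conjTranspose_mul_self, Complex.ofReal_re]
      have hrnn : 0 ≤ r :=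
        Finset.sum_nonneg fun i _ => Finset.sum_nonneg fun j _ => sq_nonneg _
      have h1 : t.re ≤ ∑ i, ∑ j, ‖X i j‖ * ‖Y j i‖ := by
        calc t.re ≤ ‖t‖ := Complex.re_le_norm t
          _ = ‖∑ i, ∑ j, X i j * Y j i‖ := by rw [← htsum]
          _ ≤ ∑ i, ∑ j, ‖X i j * Y j i‖ :=
              (norm_sum_le _ _).trans (Finset.sum_le_sum fun i _ => norm_sum_le _ _)
          _ = ∑ i, ∑ j, ‖X i j‖ * ‖Y j i‖ := by simp [norm_mul]
      have h2 : (∑ i, ∑ j, ‖X i j‖ * ‖Y j i‖) ^ 2 ≤ q * r := by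
        have hcs := Finset.sum_mul_sq_le_sq_mul_sq Finset.univ
          (fun p : Fin m × Fin m => ‖X p.1 p.2‖) (fun p : Fin m × Fin m => ‖Y p.2 p.1‖)
        rw [Fintype.sum_prod_type, Fintype.sum_prod_type, Fintype.sum_prod_type] at hcs
        calc (∑ i, ∑ j, ‖X i j‖ * ‖Y j i‖) ^ 2 ≤ _ := hcs
          _ = q * r := by rw [hqdef, hrdef]; rw [Finset.sum_comm (f := fun i j => ‖X i j‖ ^ 2)]
      have h3 : t.re ^ 2 ≤ q * r := by
        have hnn : (0:ℝ) ≤ ∑ i, ∑ j, ‖X i j‖ * ‖Y j i‖ :=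
          Finset.sum_nonneg fun i _ => Finset.sum_nonneg fun j _ =>
            mul_nonneg (norm_nonneg _) (norm_nonneg _)
        nlinarith [htre]
      have h4 : t.re ^ 2 ≤ P * r := by
        have : q * r ≤ P * r := mul_le_mul_of_nonneg_right (hq ▸ hZP) hrnn
        linarith
      have hre : ((t ^ 2 / (P : ℂ))).re = t.re ^ 2 / P := by
        have : t ^ 2 / (P : ℂ) = ((t.re ^ 2 / P : ℝ) : ℂ) := by
          rw [Complex.ofReal_div, Complex.ofReal_pow, ← htr]
        rw [this, Complex.ofReal_re]
      rw [hre, hr]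
      rw [div_le_iff₀ hP]
      linarith
end

section
/- Weak duality for the ZF–ZF filter design: for any positive definite Hermitian Z with tr(B⁻¹ Z) ≥ γ and tr(Z⁻¹) ≤ P, and any ν ≥ 0 with A⁻¹ − ν B⁻¹ ⪰ 0, one has tr(A⁻¹ Z) ≥ (1/P)·tr((A⁻¹ − ν B⁻¹)^{1/2})² + ν γ. -/
open Matrix
open scoped ComplexOrder

lemma trace_herm_entries {m : ℕ} (X Y : Matrix (Fin m) (Fin m) ℂ) :
    ((Xᴴ * Y).trace) = ∑ p : Fin m × Fin m, (starRingEnd ℂ) (X p.2 p.1) * Y p.2 p.1 := by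
  rw [Matrix.trace]
  simp only [Matrix.diag, Matrix.mul_apply, Matrix.conjTranspose_apply]
  rw [← Finset.sum_product']
  rfl

lemma trace_sq_re {m : ℕ} (X : Matrix (Fin m) (Fin m) ℂ) :
    ((Xᴴ * X).trace).re = ∑ p : Fin m × Fin m, ‖X p.2 p.1‖ ^ 2 := by
  rw [trace_herm_entries, Complex.re_sum]
  refine Finset.sum_congr rfl fun p _ => ?_
  rw [Complex.conj_mul']
  simp [← Complex.ofReal_pow, Complex.norm_def]

lemma trace_cs {m : ℕ} (X Y : Matrix (Fin m) (Fin m) ℂ) :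
    (((Xᴴ * Y).trace).re) ^ 2 ≤ ((Xᴴ * X).trace).re * ((Yᴴ * Y).trace).re := by
  rw [trace_sq_re X, trace_sq_re Y]
  have h1 : |((Xᴴ * Y).trace).re| ≤
      ∑ p : Fin m × Fin m, ‖X p.2 p.1‖ * ‖Y p.2 p.1‖ := by
    rw [trace_herm_entries, Complex.re_sum]
    calc |∑ p : Fin m × Fin m, ((starRingEnd ℂ) (X p.2 p.1) * Y p.2 p.1).re|
        ≤ ∑ p : Fin m × Fin m, |((starRingEnd ℂ) (X p.2 p.1) * Y p.2 p.1).re| :=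
          Finset.abs_sum_le_sum_abs _ _
      _ ≤ ∑ p : Fin m × Fin m, ‖X p.2 p.1‖ * ‖Y p.2 p.1‖ := by
          refine Finset.sum_le_sum fun p _ => ?_
          calc |((starRingEnd ℂ) (X p.2 p.1) * Y p.2 p.1).re|
              ≤ ‖(starRingEnd ℂ) (X p.2 p.1) * Y p.2 p.1‖ :=
                Complex.abs_re_le_norm _
            _ = ‖X p.2 p.1‖ * ‖Y p.2 p.1‖ := by
                rw [norm_mul, Complex.norm_conj]
  calc (((Xᴴ * Y).trace).re) ^ 2 = |((Xᴴ * Y).trace).re| ^ 2 := (sq_abs _).symm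
    _ ≤ (∑ p : Fin m × Fin m, ‖X p.2 p.1‖ * ‖Y p.2 p.1‖) ^ 2 := by
        refine pow_le_pow_left₀ (abs_nonneg _) h1 2
    _ ≤ (∑ p : Fin m × Fin m, ‖X p.2 p.1‖ ^ 2) *
        ∑ p : Fin m × Fin m, ‖Y p.2 p.1‖ ^ 2 :=
      Finset.sum_mul_sq_le_sq_mul_sq _ _ _

lemma psd_sqrt_props {m : ℕ} {M : Matrix (Fin m) (Fin m) ℂ} (h : M.PosSemidef) :
    ((h.1.eigenvectorUnitary : Matrix (Fin m) (Fin m) ℂ) *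
      diagonal ((fun x : ℝ => (x : ℂ)) ∘ Real.sqrt ∘ h.1.eigenvalues) *
      (star h.1.eigenvectorUnitary : Matrix (Fin m) (Fin m) ℂ))ᴴ =
    ((h.1.eigenvectorUnitary : Matrix (Fin m) (Fin m) ℂ) *
      diagonal ((fun x : ℝ => (x : ℂ)) ∘ Real.sqrt ∘ h.1.eigenvalues) *
      (star h.1.eigenvectorUnitary : Matrix (Fin m) (Fin m) ℂ)) ∧
    ((h.1.eigenvectorUnitary : Matrix (Fin m) (Fin m) ℂ) *
      diagonal ((fun x : ℝ => (x : ℂ)) ∘ Real.sqrt ∘ h.1.eigenvalues) *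
      (star h.1.eigenvectorUnitary : Matrix (Fin m) (Fin m) ℂ)) *
    ((h.1.eigenvectorUnitary : Matrix (Fin m) (Fin m) ℂ) *
      diagonal ((fun x : ℝ => (x : ℂ)) ∘ Real.sqrt ∘ h.1.eigenvalues) *
      (star h.1.eigenvectorUnitary : Matrix (Fin m) (Fin m) ℂ)) = M := by
  constructor
  · have hf : star ((fun x : ℝ => (x : ℂ)) ∘ Real.sqrt ∘ h.1.eigenvalues) =
        (fun x : ℝ => (x : ℂ)) ∘ Real.sqrt ∘ h.1.eigenvalues := by
      funext i
      simp
    rw [Matrix.conjTranspose_mul, Matrix.conjTranspose_mul, Matrix.diagonal_conjTranspose,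
      ← Matrix.star_eq_conjTranspose, ← Matrix.star_eq_conjTranspose, star_star, hf,
      Matrix.mul_assoc]
  · have hUU : (star h.1.eigenvectorUnitary : Matrix (Fin m) (Fin m) ℂ) *
        (h.1.eigenvectorUnitary : Matrix (Fin m) (Fin m) ℂ) = 1 := Unitary.coe_star_mul_self _
    have hD : diagonal ((fun x : ℝ => (x : ℂ)) ∘ Real.sqrt ∘ h.1.eigenvalues) *
        diagonal ((fun x : ℝ => (x : ℂ)) ∘ Real.sqrt ∘ h.1.eigenvalues) =
        diagonal (RCLike.ofReal ∘ h.1.eigenvalues) := by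
      rw [Matrix.diagonal_mul_diagonal]
      congr 1
      funext i
      simp only [Function.comp_apply]
      rw [← Complex.ofReal_mul, Real.mul_self_sqrt (h.eigenvalues_nonneg i)]
      rfl
    conv_rhs => rw [h.1.spectral_theorem, Unitary.conjStarAlgAut_apply]
    calc _ = (h.1.eigenvectorUnitary : Matrix (Fin m) (Fin m) ℂ) *
          (diagonal ((fun x : ℝ => (x : ℂ)) ∘ Real.sqrt ∘ h.1.eigenvalues) *
          ((star h.1.eigenvectorUnitary : Matrix (Fin m) (Fin m) ℂ) *
          (h.1.eigenvectorUnitary : Matrix (Fin m) (Fin m) ℂ)) *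
          diagonal ((fun x : ℝ => (x : ℂ)) ∘ Real.sqrt ∘ h.1.eigenvalues)) *
          (star h.1.eigenvectorUnitary : Matrix (Fin m) (Fin m) ℂ) := by
            simp only [Matrix.mul_assoc]
      _ = _ := by rw [hUU, Matrix.mul_one, hD]

/-- Weak duality for the ZF–ZF filter design: for any primal-feasible positive definite
Hermitian `Z` (i.e. `tr(B⁻¹ Z) ≥ γ` and `tr(Z⁻¹) ≤ P`) and any `ν ≥ 0` with
`A⁻¹ − ν B⁻¹ ⪰ 0`, one has `tr(A⁻¹ Z) ≥ (1/P) tr((A⁻¹ − ν B⁻¹)^{1/2})² + ν γ`. -/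
theorem weak_duality_zf {m : ℕ} (A B : Matrix (Fin m) (Fin m) ℂ)
    (hA : A.PosDef) (hB : B.PosDef) (γ P : ℝ) (hγ : 0 < γ) (hP : 0 < P)
    (Z : Matrix (Fin m) (Fin m) ℂ) (hZ : Z.PosDef)
    (hsec : ((B⁻¹ * Z).trace).re ≥ γ) (hpow : (Z⁻¹.trace).re ≤ P)
    (ν : ℝ) (hν : 0 ≤ ν) (h : (A⁻¹ - (ν : ℂ) • B⁻¹).PosSemidef) :
    ((A⁻¹ * Z).trace).re ≥ (1 / P) * ((((h.1.eigenvectorUnitary : Matrix (Fin m) (Fin m) ℂ) *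
      diagonal ((fun x : ℝ => (x : ℂ)) ∘ Real.sqrt ∘ h.1.eigenvalues) *
      (star h.1.eigenvectorUnitary : Matrix (Fin m) (Fin m) ℂ)).trace).re) ^ 2 + ν * γ := by
  set M : Matrix (Fin m) (Fin m) ℂ := A⁻¹ - (ν : ℂ) • B⁻¹ with hM
  set S : Matrix (Fin m) (Fin m) ℂ := (h.1.eigenvectorUnitary : Matrix (Fin m) (Fin m) ℂ) *
      diagonal ((fun x : ℝ => (x : ℂ)) ∘ Real.sqrt ∘ h.1.eigenvalues) *
      (star h.1.eigenvectorUnitary : Matrix (Fin m) (Fin m) ℂ) with hS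
  set W : Matrix (Fin m) (Fin m) ℂ := (hZ.posSemidef.1.eigenvectorUnitary : Matrix (Fin m) (Fin m) ℂ) *
      diagonal ((fun x : ℝ => (x : ℂ)) ∘ Real.sqrt ∘ hZ.posSemidef.1.eigenvalues) *
      (star hZ.posSemidef.1.eigenvectorUnitary : Matrix (Fin m) (Fin m) ℂ) with hW
  have hSH : Sᴴ = S := (psd_sqrt_props h).1
  have hSS : S * S = M := (psd_sqrt_props h).2
  have hWH : Wᴴ = W := (psd_sqrt_props hZ.posSemidef).1
  have hWW : W * W = Z := (psd_sqrt_props hZ.posSemidef).2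
  -- W is invertible
  have hdetZ : Z.det ≠ 0 := hZ.det_pos.ne'
  have hdetW : IsUnit W.det := by
    rw [isUnit_iff_ne_zero]
    intro h0
    apply hdetZ
    rw [← hWW, Matrix.det_mul, h0, mul_zero]
  have hWWi : W * W⁻¹ = 1 := Matrix.mul_nonsing_inv W hdetW
  have hWiW : W⁻¹ * W = 1 := Matrix.nonsing_inv_mul W hdetW
  have hWiH : (W⁻¹)ᴴ = W⁻¹ := by
    rw [Matrix.conjTranspose_nonsing_inv, hWH]
  have hWiWi : W⁻¹ * W⁻¹ = Z⁻¹ := by rw [← Matrix.mul_inv_rev, hWW]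
  -- trace identities
  have key1 : (((S * W)ᴴ * W⁻¹).trace) = S.trace := by
    rw [Matrix.conjTranspose_mul, hSH, hWH, Matrix.trace_mul_cycle, hWiW, Matrix.one_mul]
  have key2 : (((S * W)ᴴ * (S * W)).trace) = (M * Z).trace := by
    rw [Matrix.conjTranspose_mul, hSH, hWH, Matrix.trace_mul_comm]
    rw [Matrix.mul_assoc, ← Matrix.mul_assoc W W S, hWW]
    rw [← Matrix.mul_assoc, Matrix.trace_mul_cycle, hSS]
  have key3 : (((W⁻¹)ᴴ * W⁻¹).trace) = Z⁻¹.trace := by rw [hWiH, hWiWi]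
  -- Cauchy–Schwarz
  have hcs : ((S.trace).re) ^ 2 ≤ ((M * Z).trace).re * (Z⁻¹.trace).re := by
    have := trace_cs (S * W) (W⁻¹)
    rwa [key1, key2, key3] at this
  -- nonnegativity
  have hMZnn : 0 ≤ ((M * Z).trace).re := by
    rw [← key2, trace_sq_re]
    exact Finset.sum_nonneg fun p _ => sq_nonneg _
  have hZinn : 0 ≤ (Z⁻¹.trace).re := by
    rw [← key3, trace_sq_re]
    exact Finset.sum_nonneg fun p _ => sq_nonneg _
  have hcs2 : ((S.trace).re) ^ 2 ≤ ((M * Z).trace).re * P :=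
    hcs.trans (mul_le_mul_of_nonneg_left hpow hMZnn)
  have hdiv : (1 / P) * ((S.trace).re) ^ 2 ≤ ((M * Z).trace).re := by
    rw [one_div, inv_mul_le_iff₀ hP, mul_comm]
    exact hcs2
  -- trace decomposition
  have hdec : ((A⁻¹ * Z).trace).re = ((M * Z).trace).re + ν * ((B⁻¹ * Z).trace).re := by
    rw [hM, Matrix.sub_mul, Matrix.smul_mul, Matrix.trace_sub, Matrix.trace_smul]
    simp [Complex.sub_re, Complex.mul_re]
  have hνγ : ν * γ ≤ ν * ((B⁻¹ * Z).trace).re := mul_le_mul_of_nonneg_left hsec hν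
  rw [hdec]
  linarith
end
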